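/- With the same setup, for any two unclaimed vertices v₁, v₂ (σ(v₁)=σ(v₂)=U, v₁≠v₂), we have Δ_{B←v₂}(σ_{B←v₁}) ≤ Δ_{B←v₂}(σ); that is, claiming a vertex for Breaker can only decrease the B-potential of any other unclaimed vertex. -/
import Mathlib


open scoped Classical

inductive Mark : Type
  | U | M | B
deriving DecidableEq

noncomputable def wS {V : Type*} (lam : ℝ) (σ : V → Mark) (S : Finset V) : ℝ :=
  if ∀ v ∈ S, σ v ≠ Mark.B then lam ^ (S.filter fun v => σ v = Mark.U).card else 0

noncomputable def totalW {V : Type*} (lam : ℝ) (E : Set (Finset V)) (σ : V → Mark) : ℝ :=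
  ∑' S : E, wS lam σ S.1


lemma wS_congr {V : Type*} (lam : ℝ) {σ τ : V → Mark} {S : Finset V}
    (h : ∀ v ∈ S, σ v = τ v) : wS lam σ S = wS lam τ S := by
  unfold wS
  have hc : (∀ v ∈ S, σ v ≠ Mark.B) ↔ (∀ v ∈ S, τ v ≠ Mark.B) := by
    constructor <;> intro hh v hv <;> have := hh v hv <;> rw [h v hv] at * <;> assumption
  have hf : (S.filter fun v => σ v = Mark.U) = (S.filter fun v => τ v = Mark.U) := by
    apply Finset.filter_congr; intro v hv; rw [h v hv]
  rw [hf]; exact if_congr hc rfl rfl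

lemma wS_zero_of_B {V : Type*} (lam : ℝ) {σ : V → Mark} {S : Finset V}
    {v : V} (hv : v ∈ S) (hB : σ v = Mark.B) : wS lam σ S = 0 := by
  unfold wS
  rw [if_neg]
  intro h; exact h v hv hB

/-- Observation: `Δ_{B←v₂}(σ_{B←v₁}) ≤ Δ_{B←v₂}(σ)`. -/
theorem stmt_2 {V : Type*} (lam : ℝ) (h0 : 0 < lam) (h1 : lam < 1)
    (E : Set (Finset V)) (σ : V → Mark) (v₁ v₂ : V) (hne : v₁ ≠ v₂)
    (hv₁ : σ v₁ = Mark.U) (hv₂ : σ v₂ = Mark.U)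
    (hσ : Summable fun S : E => wS lam σ S.1)
    (h1B : Summable fun S : E => wS lam (Function.update σ v₁ Mark.B) S.1)
    (h2B : Summable fun S : E => wS lam (Function.update σ v₂ Mark.B) S.1)
    (h12B : Summable fun S : E =>
      wS lam (Function.update (Function.update σ v₁ Mark.B) v₂ Mark.B) S.1) :
    totalW lam E (Function.update σ v₁ Mark.B)
        - totalW lam E (Function.update (Function.update σ v₁ Mark.B) v₂ Mark.B)
      ≤ totalW lam E σ - totalW lam E (Function.update σ v₂ Mark.B) := by
  set σ₁ := Function.update σ v₁ Mark.B with hσ1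
  set σ₂ := Function.update σ v₂ Mark.B with hσ2
  set σ₁₂ := Function.update σ₁ v₂ Mark.B with hσ12
  unfold totalW
  rw [← Summable.tsum_sub h1B h12B, ← Summable.tsum_sub hσ h2B]
  apply Summable.tsum_le_tsum _ (h1B.sub h12B) (hσ.sub h2B)
  intro S
  by_cases hB : ∀ v ∈ S.1, σ v ≠ Mark.B
  · by_cases h2 : v₂ ∈ S.1
    · by_cases hm1 : v₁ ∈ S.1
      · have e1 : wS lam σ₁ S.1 = 0 := wS_zero_of_B lam hm1 (by simp [hσ1])
        have e12 : wS lam σ₁₂ S.1 = 0 := wS_zero_of_B lam h2 (by simp [hσ12])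
        have e2 : wS lam σ₂ S.1 = 0 := wS_zero_of_B lam h2 (by simp [hσ2])
        rw [e1, e12, e2]
        have : (0:ℝ) ≤ wS lam σ S.1 := by
          unfold wS
          split <;> positivity
        linarith
      · have e1 : wS lam σ₁ S.1 = wS lam σ S.1 := by
          apply wS_congr; intro v hv
          rw [hσ1, Function.update_apply, if_neg]
          rintro rfl; exact hm1 hv
        have e12 : wS lam σ₁₂ S.1 = wS lam σ₂ S.1 := by
          apply wS_congr; intro v hv
          rw [hσ12, hσ1, hσ2, Function.update_apply, Function.update_apply,
            Function.update_apply]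
          by_cases hv2 : v = v₂
          · simp [hv2]
          · simp only [if_neg hv2]
            rw [if_neg]
            rintro rfl; exact hm1 hv
        rw [e1, e12]
    · have e2 : wS lam σ₂ S.1 = wS lam σ S.1 := by
        apply wS_congr; intro v hv
        rw [hσ2, Function.update_apply, if_neg]
        rintro rfl; exact h2 hv
      have e12 : wS lam σ₁₂ S.1 = wS lam σ₁ S.1 := by
        apply wS_congr; intro v hv
        rw [hσ12, Function.update_apply, if_neg]
        rintro rfl; exact h2 hv
      rw [e2, e12]; simp
  · push_neg at hB
    obtain ⟨v, hv, hvB⟩ := hB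
    have hne1 : v ≠ v₁ := by rintro rfl; rw [hv₁] at hvB; exact Mark.noConfusion hvB
    have hne2 : v ≠ v₂ := by rintro rfl; rw [hv₂] at hvB; exact Mark.noConfusion hvB
    have b1 : σ₁ v = Mark.B := by rw [hσ1, Function.update_apply, if_neg hne1]; exact hvB
    have b2 : σ₂ v = Mark.B := by rw [hσ2, Function.update_apply, if_neg hne2]; exact hvB
    have b12 : σ₁₂ v = Mark.B := by rw [hσ12, Function.update_apply, if_neg hne2]; exact b1
    rw [wS_zero_of_B lam hv hvB, wS_zero_of_B lam hv b1, wS_zero_of_B lam hv b2,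
      wS_zero_of_B lam hv b12]
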